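/- Let g ≥ 2, let C_1, …, C_g be pairwise disjoint nonempty finite sets with union C, and let σ be a permutation of C with w(σ) ≤ g−2. Then there exists a nonempty proper subset I of {1,…,g} such that σ(C_I) = C_I. -/

import Mathlib

open scoped Classical

/-- The weight of a permutation of a finite set: the cardinality of the set minus the
number of orbits (cycles, counting fixed points as cycles). -/
noncomputable def permWeight {A : Type*} (σ : Equiv.Perm A) : ℕ :=
  Nat.card A - Nat.card (Quotient (MulAction.orbitRel (Subgroup.zpowers σ) A))

/-- `P` is a partition of `Fin g` into nonempty parts, presented as a finite set of
pairwise disjoint nonempty finsets with union everything. -/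
def IsSetPartition {g : ℕ} (P : Finset (Finset (Fin g))) : Prop :=
  (∀ I ∈ P, I.Nonempty) ∧
  (∀ I ∈ P, ∀ J ∈ P, I ≠ J → Disjoint I J) ∧
  P.sup id = Finset.univ

/-- A partition `P` of `{1,…,g}` admits a permutation `σ` of the ambient set if
`σ(C_I) = C_I` for every part `I` of `P`, where `C_I = ⋃_{i ∈ I} C_i`. -/
def Admits {g : ℕ} {α : Type*} [DecidableEq α] (C : Fin g → Finset α)
    (σ : Equiv.Perm α) (P : Finset (Finset (Fin g))) : Prop :=
  ∀ I ∈ P, (I.biUnion C).image σ = I.biUnion C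

private lemma orbitRelIff {α : Type*} (σ : Equiv.Perm α) (x y : α) :
    (MulAction.orbitRel (Subgroup.zpowers σ) α) x y ↔ ∃ n : ℤ, (σ ^ n) y = x := by
  rw [MulAction.orbitRel_apply, MulAction.mem_orbit_iff]
  constructor
  · rintro ⟨⟨g, n, rfl⟩, h⟩; exact ⟨n, h⟩
  · rintro ⟨n, h⟩; exact ⟨⟨σ ^ n, n, rfl⟩, h⟩

private lemma card_succ_le_of_surj {A B : Type*} [Finite B] (q : B → A)
    (hq : Function.Surjective q) (b₁ b₂ : B) (hb : b₁ ≠ b₂) (heq : q b₁ = q b₂) :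
    Nat.card A + 1 ≤ Nat.card B := by
  have hsurj : Function.Surjective (fun b : {b : B // b ≠ b₂} => q b.1) := by
    intro a
    obtain ⟨b, rfl⟩ := hq a
    by_cases h : b = b₂
    · exact ⟨⟨b₁, hb⟩, by simp only []; rw [heq, h]⟩
    · exact ⟨⟨b, h⟩, rfl⟩
  have h1 : Nat.card A ≤ Nat.card {b : B // b ≠ b₂} :=
    Nat.card_le_card_of_surjective _ hsurj
  have h2 : Nat.card {b : B // b ≠ b₂} < Nat.card B := by
    have := Fintype.ofFinite B
    simp only [Nat.card_eq_fintype_card]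
    exact Fintype.card_subtype_lt (x := b₂) (by simp)
  omega

/-- Splitting a cycle: multiplying by the swap `(x₀, σ x₀)` increases the orbit count. -/
private lemma orbit_count_lt {α : Type*} [Finite α] (σ : Equiv.Perm α) (x₀ : α)
    (hx : σ x₀ ≠ x₀) :
    Nat.card (Quotient (MulAction.orbitRel (Subgroup.zpowers σ) α)) + 1
      ≤ Nat.card (Quotient (MulAction.orbitRel
          (Subgroup.zpowers (Equiv.swap x₀ (σ x₀) * σ)) α)) := by
  set σ' : Equiv.Perm α := Equiv.swap x₀ (σ x₀) * σ with hσ'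
  have hσ'app : ∀ z, σ' z = Equiv.swap x₀ (σ x₀) (σ z) := fun z => rfl
  have hfix : σ' x₀ = x₀ := by
    rw [hσ'app, Equiv.swap_apply_right]
  have step : ∀ z, σ.SameCycle z (σ' z) := by
    intro z
    rw [hσ'app]
    by_cases h1 : σ z = x₀
    · rw [h1, Equiv.swap_apply_left]
      refine ⟨2, ?_⟩
      rw [show (2:ℤ) = 1 + 1 from rfl, zpow_add, zpow_one, Equiv.Perm.mul_apply, h1]
    · by_cases h2 : σ z = σ x₀
      · have : z = x₀ := σ.injective h2
        rw [h2, Equiv.swap_apply_right, this]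
      · rw [Equiv.swap_apply_of_ne_of_ne h1 h2]
        exact ⟨1, by simp⟩
  have stepinv : ∀ z, σ.SameCycle z (σ'⁻¹ z) := by
    intro z
    have := step (σ'⁻¹ z)
    rw [show ∀ w, σ' (σ'⁻¹ w) = w from σ'.apply_symm_apply] at this
    exact this.symm
  have all : ∀ n : ℤ, ∀ z, σ.SameCycle z ((σ' ^ n) z) := by
    intro n
    induction n using Int.induction_on with
    | zero => intro z; exact ⟨0, by simp⟩
    | succ i ih =>
        intro z
        have : σ' ^ ((i : ℤ) + 1) = σ' ^ (i : ℤ) * σ' := zpow_add_one σ' i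
        rw [this]
        exact (step z).trans (ih (σ' z))
    | pred i ih =>
        intro z
        have : σ' ^ (-(i : ℤ) - 1) = σ' ^ (-(i : ℤ)) * σ'⁻¹ := zpow_sub_one σ' (-i)
        rw [this]
        exact (stepinv z).trans (ih (σ'⁻¹ z))
  have wd : ∀ a b : α, (MulAction.orbitRel (Subgroup.zpowers σ') α) a b →
      (MulAction.orbitRel (Subgroup.zpowers σ) α) a b := by
    intro a b h
    rw [orbitRelIff] at h ⊢
    obtain ⟨n, rfl⟩ := h
    exact all n b
  let φ : Quotient (MulAction.orbitRel (Subgroup.zpowers σ') α) →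
      Quotient (MulAction.orbitRel (Subgroup.zpowers σ) α) :=
    Quotient.lift (fun a => Quotient.mk _ a)
      (fun a b h => Quotient.sound (wd a b h))
  have hφsurj : Function.Surjective φ := by
    intro q
    obtain ⟨a, rfl⟩ := Quotient.exists_rep q
    exact ⟨Quotient.mk _ a, rfl⟩
  have hb : (Quotient.mk _ x₀ : Quotient (MulAction.orbitRel (Subgroup.zpowers σ') α))
      ≠ Quotient.mk _ (σ x₀) := by
    intro h
    have h' := Quotient.exact h
    obtain ⟨n, hn⟩ := (orbitRelIff σ' x₀ (σ x₀)).mp h'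
    have hfixn : (σ' ^ n) x₀ = x₀ := by
      clear hn
      induction n using Int.induction_on with
      | zero => simp
      | succ i ih => rw [zpow_add_one, Equiv.Perm.mul_apply, hfix, ih]
      | pred i ih =>
          have hinv : σ'⁻¹ x₀ = x₀ := by
            apply σ'.injective
            rw [show ∀ w, σ' (σ'⁻¹ w) = w from σ'.apply_symm_apply, hfix]
          rw [zpow_sub_one, Equiv.Perm.mul_apply, hinv, ih]
    exact hx ((σ' ^ n).injective (hn.trans hfixn.symm))
  have heqφ : φ (Quotient.mk _ x₀) = φ (Quotient.mk _ (σ x₀)) := by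
    exact Quotient.sound ((orbitRelIff σ x₀ (σ x₀)).mpr ⟨-1, by simp⟩)
  exact card_succ_le_of_surj φ hφsurj _ _ hb heqφ

private lemma orbit_count_le {α : Type*} [Finite α] (σ : Equiv.Perm α) :
    Nat.card (Quotient (MulAction.orbitRel (Subgroup.zpowers σ) α)) ≤ Nat.card α :=
  Nat.card_le_card_of_surjective _ (Quotient.mk_surjective)

/-- Key counting lemma: if the relation generated by "same block" and "σ-step"
is connected on `α`, then the number of orbits plus the number of blocks is at
most `|α| + 1`. -/
private lemma key_lemma {α : Type*} [Fintype α] {β : Type*} [DecidableEq β] :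
    ∀ (k : ℕ) (σ : Equiv.Perm α) (f : α → β),
    (Finset.univ.image f).card = k →
    (∀ x y : α, Relation.EqvGen (fun a b => f a = f b ∨ b = σ a) x y) →
    Nat.card (Quotient (MulAction.orbitRel (Subgroup.zpowers σ) α)) + k
      ≤ Fintype.card α + 1 := by
  intro k
  induction k with
  | zero =>
      intro σ f _ _
      have h1 := orbit_count_le σ
      have h2 : Nat.card α = Fintype.card α := Nat.card_eq_fintype_card
      omega
  | succ k ih =>
      intro σ f hcard hconn
      by_cases hk : k = 0
      · subst hk
        have h1 := orbit_count_le σ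
        have h2 : Nat.card α = Fintype.card α := Nat.card_eq_fintype_card
        omega
      -- k ≥ 1, so there are at least two blocks
      have hx : ∃ x : α, f (σ x) ≠ f x := by
        by_contra hall
        push_neg at hall
        have hconst : ∀ x y : α, Relation.EqvGen
            (fun a b => f a = f b ∨ b = σ a) x y → f x = f y := by
          intro x y h
          induction h with
          | rel a b hab => rcases hab with h | h
                           · exact h
                           · rw [h, hall]
          | refl a => rfl
          | symm a b _ ih2 => exact ih2.symm
          | trans a b c _ _ ih1 ih2 => exact ih1.trans ih2
        -- f is constant, so the image has at most one element
        have h2 : 1 < (Finset.univ.image f).card := by omega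
        rw [Finset.one_lt_card] at h2
        obtain ⟨a, ha, b, hb, hab⟩ := h2
        obtain ⟨x, -, rfl⟩ := Finset.mem_image.mp ha
        obtain ⟨y, -, rfl⟩ := Finset.mem_image.mp hb
        exact hab (hconst x y (hconn x y))
      obtain ⟨x₀, hx₀⟩ := hx
      set y₀ := σ x₀ with hy₀
      have hxy : f x₀ ≠ f y₀ := fun h => hx₀ (h.symm)
      set σ' : Equiv.Perm α := Equiv.swap x₀ y₀ * σ with hσ'
      set f' : α → β := fun z => if f z = f y₀ then f x₀ else f z with hf'
      -- (a) image cardinality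
      have hf'val : ∀ z, f' z = if f z = f y₀ then f x₀ else f z := fun z => rfl
      have himage : Finset.univ.image f' = (Finset.univ.image f).erase (f y₀) := by
        ext b
        simp only [Finset.mem_image, Finset.mem_erase, Finset.mem_univ, true_and]
        constructor
        · rintro ⟨z, rfl⟩
          by_cases h : f z = f y₀
          · rw [hf'val, if_pos h]
            exact ⟨hxy, x₀, rfl⟩
          · rw [hf'val, if_neg h]
            exact ⟨h, z, rfl⟩
        · rintro ⟨hb, z, rfl⟩
          exact ⟨z, by rw [hf'val, if_neg hb]⟩
      have hcard' : (Finset.univ.image f').card = k := by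
        rw [himage, Finset.card_erase_of_mem
          (Finset.mem_image_of_mem f (Finset.mem_univ y₀)), hcard]
        omega
      -- (b) connectivity for σ', f'
      have hstep : ∀ a b : α, (fun a b => f a = f b ∨ b = σ a) a b →
          Relation.EqvGen (fun a b => f' a = f' b ∨ b = σ' a) a b := by
        intro a b hab
        have hf'eq : ∀ u v : α, f u = f v → f' u = f' v := by
          intro u v h; simp only [hf', h]
        have hx₀y₀ : f' x₀ = f' y₀ := by
          simp only [hf', if_neg hxy, if_pos rfl]
        rcases hab with h | h
        · exact Relation.EqvGen.rel _ _ (Or.inl (hf'eq a b h))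
        · subst h
          by_cases h1 : σ a = x₀
          · -- σ' a = y₀, and y₀ ~ x₀ by block equality
            have ha' : σ' a = y₀ := by
              show Equiv.swap x₀ y₀ (σ a) = y₀
              rw [h1, Equiv.swap_apply_left]
            refine Relation.EqvGen.trans _ y₀ _
              (Relation.EqvGen.rel _ _ (Or.inr ha'.symm)) ?_
            rw [h1]
            exact Relation.EqvGen.rel _ _ (Or.inl hx₀y₀.symm)
          · by_cases h2 : σ a = y₀
            · -- a = x₀, step via block equality
              have : a = x₀ := σ.injective (h2.trans hy₀)
              subst this
              rw [h2]
              exact Relation.EqvGen.rel _ _ (Or.inl hx₀y₀)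
            · have : σ' a = σ a := by
                show Equiv.swap x₀ y₀ (σ a) = σ a
                exact Equiv.swap_apply_of_ne_of_ne h1 h2
              exact Relation.EqvGen.rel _ _ (Or.inr this.symm)
      have hconn' : ∀ x y : α, Relation.EqvGen (fun a b => f' a = f' b ∨ b = σ' a) x y := by
        intro x y
        have h := hconn x y
        induction h with
        | rel a b hab => exact hstep a b hab
        | refl a => exact Relation.EqvGen.refl a
        | symm a b _ ih2 => exact Relation.EqvGen.symm _ _ ih2
        | trans a b c _ _ ih1 ih2 => exact Relation.EqvGen.trans _ _ _ ih1 ih2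
      -- (c) orbit count
      have horb : Nat.card (Quotient (MulAction.orbitRel (Subgroup.zpowers σ) α)) + 1
          ≤ Nat.card (Quotient (MulAction.orbitRel (Subgroup.zpowers σ') α)) :=
        orbit_count_lt σ x₀ (fun h => hx₀ (congrArg f h))
      have hih := ih σ' f' hcard' hconn'
      omega

/-- If `C_1, …, C_g` (`g ≥ 2`) are pairwise disjoint nonempty finite sets with union `C`
and `σ` is a permutation of `C` of weight at most `g − 2`, then there is a nonempty
proper subset `I` of `{1,…,g}` with `σ(C_I) = C_I`. -/
theorem exists_proper_invariant_subset {α : Type*} [Fintype α] [DecidableEq α]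
    (g : ℕ) (hg : 2 ≤ g) (C : Fin g → Finset α)
    (hne : ∀ i, (C i).Nonempty)
    (hdisj : ∀ i j, i ≠ j → Disjoint (C i) (C j))
    (hcover : Finset.univ.biUnion C = Finset.univ)
    (σ : Equiv.Perm α) (hw : permWeight σ ≤ g - 2) :
    ∃ I : Finset (Fin g), I.Nonempty ∧ I ≠ Finset.univ ∧
      (I.biUnion C).image σ = I.biUnion C := by
  classical
  have hex : ∀ x : α, ∃ i, x ∈ C i := by
    intro x
    have hx : x ∈ Finset.univ.biUnion C := by rw [hcover]; exact Finset.mem_univ x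
    simpa using hx
  set f : α → Fin g := fun x => (hex x).choose with hfdef
  have hf : ∀ x, x ∈ C (f x) := fun x => (hex x).choose_spec
  have huniq : ∀ x i, x ∈ C i → f x = i := by
    intro x i hx
    by_contra h
    exact Finset.disjoint_left.mp (hdisj _ _ h) (hf x) hx
  set T : α → α → Prop := fun a b => f a = f b ∨ b = σ a with hT
  by_cases hconn : ∀ x y : α, Relation.EqvGen T x y
  · exfalso
    have himg : Finset.univ.image f = (Finset.univ : Finset (Fin g)) := by
      apply Finset.eq_univ_iff_forall.mpr
      intro i
      obtain ⟨w, hw⟩ := hne i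
      have hfw : f w = i := huniq w i hw
      exact hfw ▸ Finset.mem_image_of_mem f (Finset.mem_univ w)
    have hkey := key_lemma (Finset.univ.image f).card σ f rfl hconn
    rw [himg, Finset.card_univ, Fintype.card_fin] at hkey
    have h1 := orbit_count_le σ
    have h2 : Nat.card α = Fintype.card α := Nat.card_eq_fintype_card
    unfold permWeight at hw
    omega
  · push_neg at hconn
    obtain ⟨x, y, hxy⟩ := hconn
    set I : Finset (Fin g) := Finset.univ.filter
      (fun i => ∃ z ∈ C i, Relation.EqvGen T x z) with hI
    set A : Finset α := Finset.univ.filter (fun z => Relation.EqvGen T x z) with hA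
    have hIC : I.biUnion C = A := by
      ext z
      simp only [hI, hA, Finset.mem_biUnion, Finset.mem_filter, Finset.mem_univ, true_and]
      constructor
      · rintro ⟨i, ⟨w, hwC, hw⟩, hz⟩
        have hfz : f w = f z := by rw [huniq w i hwC, huniq z i hz]
        exact Relation.EqvGen.trans _ _ _ hw (Relation.EqvGen.rel _ _ (Or.inl hfz))
      · intro hz
        exact ⟨f z, ⟨z, hf z, hz⟩, hf z⟩
    refine ⟨I, ?_, ?_, ?_⟩
    · exact ⟨f x, Finset.mem_filter.mpr
        ⟨Finset.mem_univ _, x, hf x, Relation.EqvGen.refl x⟩⟩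
    · intro h
      apply hxy
      have hyI : f y ∈ I := h ▸ Finset.mem_univ (f y)
      obtain ⟨-, z, hzC, hz⟩ := Finset.mem_filter.mp hyI
      have hfz : f z = f y := by rw [huniq z _ hzC]
      exact Relation.EqvGen.trans _ _ _ hz (Relation.EqvGen.rel _ _ (Or.inl hfz))
    · rw [hIC]
      have hsub : A.image σ ⊆ A := by
        intro b hb
        obtain ⟨a, ha, rfl⟩ := Finset.mem_image.mp hb
        have haA := (Finset.mem_filter.mp ha).2
        exact Finset.mem_filter.mpr ⟨Finset.mem_univ _,
          Relation.EqvGen.trans _ _ _ haA (Relation.EqvGen.rel _ _ (Or.inr rfl))⟩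
      exact Finset.eq_of_subset_of_card_le hsub
        (le_of_eq (Finset.card_image_of_injective _ σ.injective).symm)
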